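/- Let p : N_a → ℂ with p(n) ≠ 0 for all n, and r : N_a → ℂ. If Σ_{s=a}^{∞} Σ_{τ=a}^{s} |r(τ)|/|p(s)| < ∞ and Σ_{s=a}^{∞} 1/|p(s)| < ∞, then every solution of Δ(p(n-1)Δu(n-1)) = r(n)u(n) is bounded. -/

import Mathlib

/-- Theorem 6: if `Σ Σ |r(τ)|/|p(s)| < ∞` and `Σ 1/|p(s)| < ∞` (with `p` nonvanishing),
then all solutions of `Δ(p(n-1)Δu(n-1)) = r(n)u(n)` are bounded. -/
theorem summable_implies_bounded_solutions (p r : ℤ → ℂ) (a : ℤ)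
    (hp : ∀ n : ℤ, a - 1 ≤ n → p n ≠ 0)
    (h1 : Summable (fun j : ℕ =>
      (∑ τ ∈ Finset.Icc a (a + (j : ℤ)), ‖r τ‖) / ‖p (a + (j : ℤ))‖))
    (h2 : Summable (fun j : ℕ => 1 / ‖p (a + (j : ℤ))‖)) :
    ∀ u : ℤ → ℂ,
      (∀ n : ℤ, a ≤ n →
        p n * (u (n + 1) - u n) - p (n - 1) * (u n - u (n - 1)) = r n * u n) →
      ∃ C : ℝ, ∀ n : ℤ, a - 1 ≤ n → ‖u n‖ ≤ C := by
  intro u hu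
  set v : ℤ → ℂ := fun m => p m * (u (m + 1) - u m) with hv
  set K : ℝ := ‖u (a - 1)‖ + ‖u a‖ + ‖v (a - 1)‖ + 1
    with hKdef
  have habs : ∀ z : ℂ, 0 ≤ ‖z‖ := fun z => norm_nonneg z
  have hK1 : 1 ≤ K := by
    have := habs (u (a - 1)); have := habs (u a); have := habs (v (a - 1)); linarith
  have hK0 : 0 ≤ K := by linarith
  set R : ℕ → ℝ := fun j => ∑ τ ∈ Finset.Icc a (a + (j : ℤ)), ‖r τ‖ with hRdef
  have hRnonneg : ∀ j, 0 ≤ R j := fun j => Finset.sum_nonneg fun τ _ => habs _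
  set g : ℕ → ℝ := fun j => (1 + R j) / ‖p (a + (j : ℤ))‖ with hgdef
  have hgnonneg : ∀ j, 0 ≤ g j := fun j => by
    apply div_nonneg
    · linarith [hRnonneg j]
    · exact habs _
  set Q : ℕ → ℝ := fun j => ∏ i ∈ Finset.range j, (1 + g i) with hQdef
  have hQ1 : ∀ j, 1 ≤ Q j := by
    intro j
    show (1:ℝ) ≤ ∏ i ∈ Finset.range j, (1 + g i)
    calc (1:ℝ) = ∏ _i ∈ Finset.range j, (1:ℝ) := by simp
      _ ≤ ∏ i ∈ Finset.range j, (1 + g i) :=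
        Finset.prod_le_prod (fun i _ => zero_le_one) (fun i _ => by linarith [hgnonneg i])
  have hQ0 : ∀ j, 0 ≤ Q j := fun j => le_trans zero_le_one (hQ1 j)
  have hQsucc : ∀ j, Q (j + 1) = Q j * (1 + g j) := fun j => Finset.prod_range_succ _ _
  have hQmono : Monotone Q := by
    apply monotone_nat_of_le_succ
    intro j
    rw [hQsucc j]
    nlinarith [hQ1 j, hgnonneg j]
  -- sums over Icc equal sums over range
  have hIcc : ∀ (f : ℤ → ℝ) (j : ℕ),
      ∑ τ ∈ Finset.Icc a (a + (j : ℤ)), f τ = ∑ i ∈ Finset.range (j + 1), f (a + (i : ℤ)) := by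
    intro f j
    induction j with
    | zero => simp
    | succ j ih =>
      rw [Finset.sum_range_succ, ← ih]
      have h1 : (a + ((j : ℕ) + 1 : ℤ)) = (a + (j : ℤ)) + 1 := by omega
      have h2 : Finset.Icc a ((a + (j : ℤ)) + 1)
          = insert ((a + (j : ℤ)) + 1) (Finset.Icc a (a + (j : ℤ))) := by
        ext x
        simp only [Finset.mem_Icc, Finset.mem_insert]
        omega
      push_cast [h1, h2]
      rw [Finset.sum_insert (by simp)]
      ring
  -- the summation formula for v
  have hvsum : ∀ j : ℕ, v (a + (j : ℤ))
      = v (a - 1) + ∑ i ∈ Finset.range (j + 1), r (a + (i : ℤ)) * u (a + (i : ℤ)) := by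
    intro j
    induction j with
    | zero =>
      have h := hu a le_rfl
      have e1 : a - 1 + 1 = a := by ring
      simp only [zero_add, Finset.range_one, Finset.sum_singleton, Nat.cast_zero, add_zero]
      simp only [hv, e1]
      linear_combination h
    | succ j ih =>
      have h := hu (a + (j : ℤ) + 1) (by omega)
      have e1 : a + (j : ℤ) + 1 - 1 = a + (j : ℤ) := by ring
      have e2 : (a + ((j : ℕ) + 1 : ℤ)) = a + (j : ℤ) + 1 := by omega
      rw [Finset.sum_range_succ]
      push_cast [e2]
      simp only [hv, e1] at h ⊢
      rw [hv] at ih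
      linear_combination ih + h
  -- main inductive estimate
  have main : ∀ j : ℕ, ‖u (a + (j : ℤ))‖ ≤ K * Q j := by
    intro j
    induction j using Nat.strong_induction_on with
    | _ j ih =>
      match j with
      | 0 =>
        have : Q 0 = 1 := by simp [hQdef]
        rw [this, mul_one]
        simp only [Nat.cast_zero, add_zero]
        have := habs (u (a - 1)); have := habs (v (a - 1)); linarith
      | Nat.succ j =>
        have hj1 : (a : ℤ) - 1 ≤ a + (j : ℤ) := by omega
        have hp0 : p (a + (j : ℤ)) ≠ 0 := hp _ hj1
        have hpa : 0 < ‖p (a + (j : ℤ))‖ := by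
          simpa [norm_pos_iff] using hp0
        -- u (a+j+1) = u (a+j) + v (a+j) / p (a+j)
        have hrec : u (a + (j : ℤ) + 1) = u (a + (j : ℤ)) + v (a + (j : ℤ)) / p (a + (j : ℤ)) := by
          rw [hv]
          field_simp
          ring
        -- bound on v (a+j)
        have hvb : ‖v (a + (j : ℤ))‖ ≤ K + R j * (K * Q j) := by
          rw [hvsum j]
          calc ‖v (a - 1) + ∑ i ∈ Finset.range (j + 1),
                r (a + (i : ℤ)) * u (a + (i : ℤ))‖
              ≤ ‖v (a - 1)‖
                + ‖∑ i ∈ Finset.range (j + 1), r (a + (i : ℤ)) * u (a + (i : ℤ))‖ :=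
                norm_add_le _ _
            _ ≤ ‖v (a - 1)‖
                + ∑ i ∈ Finset.range (j + 1), ‖r (a + (i : ℤ)) * u (a + (i : ℤ))‖ := by
                gcongr
                exact norm_sum_le _ _
            _ ≤ K + R j * (K * Q j) := by
                have hterm : ∀ i ∈ Finset.range (j + 1),
                    ‖r (a + (i : ℤ)) * u (a + (i : ℤ))‖
                      ≤ ‖r (a + (i : ℤ))‖ * (K * Q j) := by
                  intro i hi
                  rw [norm_mul]
                  have hiu : ‖u (a + (i : ℤ))‖ ≤ K * Q j := by
                    have h1' := ih i (Finset.mem_range.mp hi)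
                    have h2' : Q i ≤ Q j := hQmono (by
                      have := Finset.mem_range.mp hi; omega)
                    calc ‖u (a + (i : ℤ))‖ ≤ K * Q i := h1'
                      _ ≤ K * Q j := by nlinarith
                  exact mul_le_mul_of_nonneg_left hiu (habs _)
                have hsum : ∑ i ∈ Finset.range (j + 1),
                    ‖r (a + (i : ℤ)) * u (a + (i : ℤ))‖
                      ≤ ∑ i ∈ Finset.range (j + 1), ‖r (a + (i : ℤ))‖ * (K * Q j) :=
                  Finset.sum_le_sum hterm
                have hR : ∑ i ∈ Finset.range (j + 1), ‖r (a + (i : ℤ))‖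
                    = R j := (hIcc (fun τ => ‖r τ‖) j).symm
                rw [← Finset.sum_mul, hR] at hsum
                have hKb : ‖v (a - 1)‖ ≤ K := by
                  have := habs (u (a - 1)); have := habs (u a); linarith
                linarith
        have hvb2 : ‖v (a + (j : ℤ))‖ ≤ K * Q j * (1 + R j) := by
          have hKQ : K ≤ K * Q j := by nlinarith [hQ1 j]
          nlinarith [hRnonneg j, hQ0 j]
        have e2 : (a + ((j : ℕ) + 1 : ℤ)) = a + (j : ℤ) + 1 := by omega
        push_cast [e2, hrec]
        calc ‖u (a + (j : ℤ)) + v (a + (j : ℤ)) / p (a + (j : ℤ))‖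
            ≤ ‖u (a + (j : ℤ))‖
              + ‖v (a + (j : ℤ))‖ / ‖p (a + (j : ℤ))‖ := by
              rw [← norm_div]
              exact norm_add_le _ _
          _ ≤ K * Q j + (K * Q j * (1 + R j)) / ‖p (a + (j : ℤ))‖ := by
              gcongr
              exact ih j (Nat.lt_succ_self j)
          _ = K * Q j + K * Q j * g j := by
              rw [hgdef]
              field_simp
          _ = K * Q (j + 1) := by rw [hQsucc j]; ring
  -- bound Q by the exponential of the total sums
  set S : ℝ := (∑' j : ℕ, (∑ τ ∈ Finset.Icc a (a + (j : ℤ)), ‖r τ‖)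
      / ‖p (a + (j : ℤ))‖) + (∑' j : ℕ, 1 / ‖p (a + (j : ℤ))‖) with hSdef
  have hgsum : ∀ j : ℕ, ∑ i ∈ Finset.range j, g i ≤ S := by
    intro j
    have hsplit : ∀ i : ℕ, g i = (∑ τ ∈ Finset.Icc a (a + (i : ℤ)), ‖r τ‖)
        / ‖p (a + (i : ℤ))‖ + 1 / ‖p (a + (i : ℤ))‖ := by
      intro i
      rw [hgdef, hRdef]
      rw [← add_div, add_comm]
    have h1b : ∑ i ∈ Finset.range j, (∑ τ ∈ Finset.Icc a (a + (i : ℤ)), ‖r τ‖)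
        / ‖p (a + (i : ℤ))‖
        ≤ ∑' i : ℕ, (∑ τ ∈ Finset.Icc a (a + (i : ℤ)), ‖r τ‖)
        / ‖p (a + (i : ℤ))‖ := by
      apply Summable.sum_le_tsum
      · intro i _
        apply div_nonneg (Finset.sum_nonneg fun τ _ => habs _) (habs _)
      · exact h1
    have h2b : ∑ i ∈ Finset.range j, 1 / ‖p (a + (i : ℤ))‖
        ≤ ∑' i : ℕ, 1 / ‖p (a + (i : ℤ))‖ := by
      apply Summable.sum_le_tsum
      · intro i _
        exact div_nonneg zero_le_one (habs _)
      · exact h2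
    calc ∑ i ∈ Finset.range j, g i
        = ∑ i ∈ Finset.range j, ((∑ τ ∈ Finset.Icc a (a + (i : ℤ)), ‖r τ‖)
            / ‖p (a + (i : ℤ))‖ + 1 / ‖p (a + (i : ℤ))‖) :=
          Finset.sum_congr rfl fun i _ => hsplit i
      _ = (∑ i ∈ Finset.range j, (∑ τ ∈ Finset.Icc a (a + (i : ℤ)), ‖r τ‖)
            / ‖p (a + (i : ℤ))‖)
          + ∑ i ∈ Finset.range j, 1 / ‖p (a + (i : ℤ))‖ := Finset.sum_add_distrib
      _ ≤ S := by rw [hSdef]; linarith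
  have hS0 : 0 ≤ S := le_trans (by simp) (hgsum 0)
  have hQexp : ∀ j : ℕ, Q j ≤ Real.exp S := by
    intro j
    calc Q j ≤ ∏ i ∈ Finset.range j, Real.exp (g i) := by
          apply Finset.prod_le_prod
          · intro i _; linarith [hgnonneg i]
          · intro i _; linarith [Real.add_one_le_exp (g i)]
      _ = Real.exp (∑ i ∈ Finset.range j, g i) := (Real.exp_sum _ _).symm
      _ ≤ Real.exp S := Real.exp_le_exp.mpr (hgsum j)
  refine ⟨K * Real.exp S, ?_⟩
  intro n hn
  rcases eq_or_lt_of_le hn with heq | hlt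
  · rw [← heq]
    have : (1 : ℝ) ≤ Real.exp S := Real.one_le_exp hS0
    have hKu : ‖u (a - 1)‖ ≤ K := by
      have := habs (u a); have := habs (v (a - 1)); linarith
    nlinarith
  · have hna : a ≤ n := by omega
    set j : ℕ := (n - a).toNat with hjdef
    have hnj : n = a + (j : ℤ) := by
      rw [hjdef]
      omega
    rw [hnj]
    calc ‖u (a + (j : ℤ))‖ ≤ K * Q j := main j
      _ ≤ K * Real.exp S := by nlinarith [hQexp j, hQ0 j]
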